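/- Fix an integer M > 1. There exists a constant γ < ∞ such that for every positive integer n and every x ∈ [0, M^n], |Σ_{j=1}^{n} e^{−x/M^j} − (n − log(x+1)/log M)| ≤ γ. -/

import Mathlib

theorem stmt_16 (M : ℕ) (hM : 1 < M) :
    ∃ γ : ℝ, ∀ n : ℕ, 0 < n → ∀ x ∈ Set.Icc (0 : ℝ) ((M : ℝ) ^ n),
      |(∑ j ∈ Finset.Icc 1 n, Real.exp (-x / M ^ j)) -
          ((n : ℝ) - Real.log (x + 1) / Real.log M)| ≤ γ := by
  refine ⟨6, ?_⟩
  intro n hn x hx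
  obtain ⟨hx0, hxM⟩ := hx
  have hM2 : (2:ℝ) ≤ (M:ℝ) := by exact_mod_cast hM
  have hM0 : (0:ℝ) < (M:ℝ) := by linarith
  have hMpow : ∀ j : ℕ, (0:ℝ) < (M:ℝ)^j := fun j => pow_pos hM0 j
  set j0 : ℕ := Nat.log M ⌊x⌋₊ with hj0def
  -- j0 ≤ n
  have hfloor_le : ⌊x⌋₊ ≤ M ^ n := by
    have h : x ≤ ((M ^ n : ℕ) : ℝ) := by push_cast; exact hxM
    calc ⌊x⌋₊ ≤ ⌊((M ^ n : ℕ) : ℝ)⌋₊ := Nat.floor_le_floor h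
    _ = M ^ n := Nat.floor_natCast _
  have hj0n : j0 ≤ n := by
    calc j0 ≤ Nat.log M (M ^ n) := Nat.log_mono_right hfloor_le
    _ = n := Nat.log_pow hM n
  -- M^j0 ≤ x when 1 ≤ j0
  have hpow_le : 1 ≤ j0 → (M:ℝ)^j0 ≤ x := by
    intro h1
    have hne : ⌊x⌋₊ ≠ 0 := by
      intro h; rw [hj0def, h] at h1; simp at h1
    have h2 := Nat.pow_log_le_self M hne
    calc (M:ℝ)^j0 = ((M ^ j0 : ℕ) : ℝ) := by push_cast; ring
    _ ≤ (⌊x⌋₊ : ℝ) := by exact_mod_cast h2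
    _ ≤ x := Nat.floor_le hx0
  -- x < M^(j0+1)
  have hxlt : x < (M:ℝ)^(j0+1) := by
    have h1 : ⌊x⌋₊ < M ^ (j0+1) := Nat.lt_pow_succ_log_self hM _
    have h2 : ⌊x⌋₊ + 1 ≤ M ^ (j0+1) := h1
    calc x < (⌊x⌋₊ : ℝ) + 1 := Nat.lt_floor_add_one x
    _ ≤ (M:ℝ)^(j0+1) := by exact_mod_cast h2
  set A : ℝ := ∑ j ∈ Finset.Ioc 0 j0, Real.exp (-x / (M:ℝ)^j) with hA
  set B : ℝ := ∑ j ∈ Finset.Ioc j0 n, (1 - Real.exp (-x / (M:ℝ)^j)) with hB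
  have hsplit : (∑ j ∈ Finset.Icc 1 n, Real.exp (-x / (M:ℝ) ^ j))
      = A + (((n:ℝ) - (j0:ℝ)) - B) := by
    have h1 : Finset.Icc 1 n = Finset.Ioc 0 n := by
      rw [← Finset.Icc_add_one_left_eq_Ioc]; rfl
    rw [h1, ← Finset.sum_Ioc_consecutive _ (Nat.zero_le j0) hj0n]
    have h2 : ∑ j ∈ Finset.Ioc j0 n, Real.exp (-x / (M:ℝ)^j)
        = ((n:ℝ) - (j0:ℝ)) - B := by
      rw [hB, Finset.sum_sub_distrib, Finset.sum_const, Nat.card_Ioc]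
      have h3 : ((n - j0 : ℕ) : ℝ) = (n:ℝ) - (j0:ℝ) := Nat.cast_sub hj0n
      rw [nsmul_eq_mul, h3]; ring
    rw [h2]
  have halfM : (1:ℝ)/(M:ℝ) ≤ 1/2 :=
    one_div_le_one_div_of_le (by norm_num) hM2
  have hA0 : 0 ≤ A := Finset.sum_nonneg fun j _ => (Real.exp_pos _).le
  have hA2 : A ≤ 2 := by
    by_cases hj00 : j0 = 0
    · simp [hA, hj00]
    have hj01 : 1 ≤ j0 := Nat.one_le_iff_ne_zero.mpr hj00
    have hxpos : (0:ℝ) < x := lt_of_lt_of_le (hMpow j0) (hpow_le hj01)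
    have step : ∀ j ∈ Finset.Ioc 0 j0,
        Real.exp (-x / (M:ℝ)^j) ≤ ((1:ℝ)/2) ^ (j0 - j) := by
      intro j hj
      obtain ⟨hj1, hj2⟩ := Finset.mem_Ioc.mp hj
      have ht : (0:ℝ) < x / (M:ℝ)^j := div_pos hxpos (hMpow j)
      have h1 : Real.exp (-x / (M:ℝ)^j) ≤ 1 / (x / (M:ℝ)^j) := by
        rw [neg_div, Real.exp_neg, inv_eq_one_div]
        apply one_div_le_one_div_of_le ht
        nlinarith [Real.add_one_le_exp (x / (M:ℝ)^j)]
      have h2 : (1:ℝ) / (x / (M:ℝ)^j) = (M:ℝ)^j / x := one_div_div _ _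
      have h3 : (M:ℝ)^j / x ≤ (M:ℝ)^j / (M:ℝ)^j0 :=
        div_le_div_of_nonneg_left (hMpow j).le (hMpow j0) (hpow_le hj01)
      have h4 : (M:ℝ)^j / (M:ℝ)^j0 = ((1:ℝ)/(M:ℝ)) ^ (j0 - j) := by
        rw [div_pow, one_pow, eq_div_iff (ne_of_gt (hMpow _)), div_mul_eq_mul_div,
          ← pow_add, show j + (j0 - j) = j0 by omega, div_self (ne_of_gt (hMpow j0))]
      have h5 : ((1:ℝ)/(M:ℝ)) ^ (j0 - j) ≤ ((1:ℝ)/2) ^ (j0 - j) := by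
        gcongr
      calc Real.exp (-x / (M:ℝ)^j) ≤ 1 / (x / (M:ℝ)^j) := h1
      _ = (M:ℝ)^j / x := h2
      _ ≤ (M:ℝ)^j / (M:ℝ)^j0 := h3
      _ = ((1:ℝ)/(M:ℝ)) ^ (j0 - j) := h4
      _ ≤ ((1:ℝ)/2) ^ (j0 - j) := h5
    have sub1 : Finset.Ioc 0 j0 ⊆ Finset.range (j0+1) := by
      intro j hj
      obtain ⟨_, hj2⟩ := Finset.mem_Ioc.mp hj
      exact Finset.mem_range.mpr (Nat.lt_succ_of_le hj2)
    calc A ≤ ∑ j ∈ Finset.Ioc 0 j0, ((1:ℝ)/2) ^ (j0 - j) :=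
          Finset.sum_le_sum step
    _ ≤ ∑ j ∈ Finset.range (j0+1), ((1:ℝ)/2) ^ (j0 - j) :=
          Finset.sum_le_sum_of_subset_of_nonneg sub1 (fun j _ _ => by positivity)
    _ = ∑ j ∈ Finset.range (j0+1), ((1:ℝ)/2) ^ j := by
          have := Finset.sum_range_reflect (fun i => ((1:ℝ)/2)^i) (j0+1)
          simpa using this
    _ ≤ 2 := sum_geometric_two_le _
  have hB0 : 0 ≤ B := by
    apply Finset.sum_nonneg
    intro j _
    have : Real.exp (-x / (M:ℝ)^j) ≤ 1 := by
      apply Real.exp_le_one_iff.mpr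
      rw [neg_div, neg_nonpos]
      positivity
    linarith
  have hB2 : B ≤ 2 := by
    have step : ∀ j ∈ Finset.Ioc j0 n,
        1 - Real.exp (-x / (M:ℝ)^j) ≤ ((1:ℝ)/2) ^ (j - (j0+1)) := by
      intro j hj
      obtain ⟨hj1, hj2⟩ := Finset.mem_Ioc.mp hj
      have hj1' : j0 + 1 ≤ j := hj1
      have h1 : 1 - Real.exp (-x / (M:ℝ)^j) ≤ x / (M:ℝ)^j := by
        rw [neg_div]
        nlinarith [Real.add_one_le_exp (-(x / (M:ℝ)^j))]
      have h2 : x / (M:ℝ)^j ≤ (M:ℝ)^(j0+1) / (M:ℝ)^j := by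
        gcongr
      have h3 : (M:ℝ)^(j0+1) / (M:ℝ)^j = ((1:ℝ)/(M:ℝ)) ^ (j - (j0+1)) := by
        rw [div_pow, one_pow, eq_div_iff (ne_of_gt (hMpow _)), div_mul_eq_mul_div,
          ← pow_add, show j0 + 1 + (j - (j0+1)) = j by omega, div_self (ne_of_gt (hMpow j))]
      have h4 : ((1:ℝ)/(M:ℝ)) ^ (j - (j0+1)) ≤ ((1:ℝ)/2) ^ (j - (j0+1)) := by
        gcongr
      linarith
    have reindex : ∑ j ∈ Finset.Ioc j0 n, ((1:ℝ)/2) ^ (j - (j0+1))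
        = ∑ i ∈ Finset.range (n - j0), ((1:ℝ)/2) ^ i := by
      rw [← Finset.Icc_add_one_left_eq_Ioc, ← Finset.Ico_add_one_right_eq_Icc, Finset.sum_Ico_eq_sum_range]
      have hcount : n + 1 - (j0 + 1) = n - j0 := by omega
      rw [hcount]
      apply Finset.sum_congr rfl
      intro i _
      congr 1
      omega
    calc B ≤ ∑ j ∈ Finset.Ioc j0 n, ((1:ℝ)/2) ^ (j - (j0+1)) :=
          Finset.sum_le_sum step
    _ = ∑ i ∈ Finset.range (n - j0), ((1:ℝ)/2) ^ i := reindex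
    _ ≤ 2 := sum_geometric_two_le _
  have hlogM : 0 < Real.log M := Real.log_pos (by exact_mod_cast hM)
  set L : ℝ := Real.log (x + 1) / Real.log M with hL
  have hLlow : (j0:ℝ) ≤ L := by
    rw [hL, le_div_iff₀ hlogM]
    have h1 : (M:ℝ)^j0 ≤ x + 1 := by
      by_cases hj00 : j0 = 0
      · simp [hj00]; linarith
      · have := hpow_le (Nat.one_le_iff_ne_zero.mpr hj00)
        linarith
    calc (j0:ℝ) * Real.log M = Real.log ((M:ℝ)^j0) := by rw [Real.log_pow]
    _ ≤ Real.log (x + 1) := Real.log_le_log (hMpow j0) h1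
  have hLhigh : L ≤ (j0:ℝ) + 2 := by
    rw [hL, div_le_iff₀ hlogM]
    have h1 : x + 1 ≤ (M:ℝ)^(j0+2) := by
      have hone : (1:ℝ) ≤ (M:ℝ)^(j0+1) := by
        calc (1:ℝ) = 1 ^ (j0+1) := (one_pow _).symm
        _ ≤ (M:ℝ)^(j0+1) := pow_le_pow_left₀ zero_le_one (by linarith) _
      have hps : (M:ℝ)^(j0+2) = (M:ℝ)^(j0+1) * M := by ring
      nlinarith [hxlt]
    calc Real.log (x + 1) ≤ Real.log ((M:ℝ)^(j0+2)) :=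
          Real.log_le_log (by linarith) h1
    _ = ((j0:ℝ) + 2) * Real.log M := by
          rw [Real.log_pow]; push_cast; ring
  rw [hsplit, abs_le]
  constructor <;> linarith
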